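/- Training-data conditional mean update (intermediate identity in the proof of Lemma 1, item 6): Under the leave-cluster-out setup, assume V and V₋ are well defined (i.e., τ⁻²G + D and τ⁻²X₋ᵀX₋ + D are invertible) and c·ν ≠ 1. Then τ⁻²·V₋·X₋ᵀY₋ = τ⁻²·V·g + (c·ē/(1 − c·ν))·V·x. -/

import Mathlib

open Matrix

lemma vecMulVec_mulVec' {m : Type*} [Fintype m] (w v u : m → ℝ) :
    Matrix.vecMulVec w v *ᵥ u = (v ⬝ᵥ u) • w := by
  ext i
  simp only [Matrix.mulVec, Matrix.vecMulVec_apply, dotProduct, Pi.smul_apply, smul_eq_mul,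
    Finset.sum_mul]
  exact Finset.sum_congr rfl fun j _ => by ring


/-- Training-data conditional mean update (intermediate identity in the proof of Lemma 1,
item 6): Under the leave-cluster-out setup, assume `V` and `V₋` are well defined (i.e.,
`τ⁻²G + D` and `τ⁻²X₋ᵀX₋ + D` are invertible) and `c·ν ≠ 1`. Then
`τ⁻²·V₋·X₋ᵀY₋ = τ⁻²·V·g + (c·ē/(1 − c·ν))·V·x`. -/
theorem training_conditional_mean_update {P M n : ℕ} (hn : 0 < n)
    (τ : ℝ) (hτ : 0 < τ)
    (D : Matrix (Fin P) (Fin P) ℝ) (hD : D.IsSymm)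
    (Xm : Matrix (Fin M) (Fin P) ℝ) (Ym : Fin M → ℝ)
    (x : Fin P → ℝ) (ybar : ℝ)
    (G : Matrix (Fin P) (Fin P) ℝ)
    (hG : G = Xmᵀ * Xm + (n : ℝ) • Matrix.vecMulVec x x)
    (g : Fin P → ℝ) (hg : g = Xmᵀ *ᵥ Ym + ((n : ℝ) * ybar) • x)
    (V Vm : Matrix (Fin P) (Fin P) ℝ)
    (hV : V = ((τ ^ 2)⁻¹ • G + D)⁻¹)
    (hVm : Vm = ((τ ^ 2)⁻¹ • (Xmᵀ * Xm) + D)⁻¹)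
    (hVinv : IsUnit ((τ ^ 2)⁻¹ • G + D).det)
    (hVminv : IsUnit ((τ ^ 2)⁻¹ • (Xmᵀ * Xm) + D).det)
    (c ν ytil ebar : ℝ)
    (hc : c = (n : ℝ) / τ ^ 2) (hν : ν = x ⬝ᵥ V *ᵥ x)
    (hyt : ytil = (τ ^ 2)⁻¹ * (x ⬝ᵥ V *ᵥ g)) (heb : ebar = ytil - ybar)
    (hcν : c * ν ≠ 1) :
    (τ ^ 2)⁻¹ • (Vm *ᵥ (Xmᵀ *ᵥ Ym)) =
      (τ ^ 2)⁻¹ • (V *ᵥ g) + ((c * ebar) / (1 - c * ν)) • (V *ᵥ x) := by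
  have hτ2 : (τ:ℝ) ^ 2 ≠ 0 := pow_ne_zero _ (ne_of_gt hτ)
  set A : Matrix (Fin P) (Fin P) ℝ := (τ ^ 2)⁻¹ • G + D with hA
  set B : Matrix (Fin P) (Fin P) ℝ := (τ ^ 2)⁻¹ • (Xmᵀ * Xm) + D with hB
  have hAV : A * V = 1 := by rw [hV]; exact Matrix.mul_nonsing_inv _ hVinv
  have hVmB : Vm * B = 1 := by rw [hVm]; exact Matrix.nonsing_inv_mul _ hVminv
  have hBA : B = A - c • Matrix.vecMulVec x x := by
    rw [hA, hG, hc, div_eq_inv_mul, smul_add, smul_smul]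
    abel
    exact hB
  set k : ℝ := (c * ebar) / (1 - c * ν) with hk
  set u : Fin P → ℝ := (τ ^ 2)⁻¹ • (V *ᵥ g) + k • (V *ᵥ x) with hu
  have hxu : x ⬝ᵥ u = ytil + k * ν := by
    rw [hu, dotProduct_add, dotProduct_smul, dotProduct_smul, hyt, hν]
    simp only [smul_eq_mul]
  have hAu : A *ᵥ u = (τ ^ 2)⁻¹ • g + k • x := by
    rw [hu]
    simp only [Matrix.mulVec_add, Matrix.mulVec_smul, Matrix.mulVec_mulVec, hAV,
      Matrix.one_mulVec]
  have key : B *ᵥ u = (τ ^ 2)⁻¹ • (Xmᵀ *ᵥ Ym) := by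
    rw [hBA, Matrix.sub_mulVec, Matrix.smul_mulVec, vecMulVec_mulVec', hAu, hxu]
    have hXY : Xmᵀ *ᵥ Ym = g - ((n : ℝ) * ybar) • x := by rw [hg]; abel
    rw [hXY, smul_sub, smul_smul, smul_smul]
    have hs : k - c * (ytil + k * ν) = -((τ ^ 2)⁻¹ * ((n : ℝ) * ybar)) := by
      have h1 : (1 : ℝ) - c * ν ≠ 0 := by
        intro h; apply hcν; linarith
      have h2 : τ ^ 2 - (n : ℝ) * ν ≠ 0 := by
        intro h; apply h1; rw [hc]; field_simp; linarith
      rw [hk, hc, heb]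
      field_simp
      ring
    have : (τ ^ 2)⁻¹ • g + k • x - (c * (ytil + k * ν)) • x
        = (τ ^ 2)⁻¹ • g + (k - c * (ytil + k * ν)) • x := by
      rw [sub_smul]; abel
    rw [this, hs]
    module
  calc (τ ^ 2)⁻¹ • (Vm *ᵥ (Xmᵀ *ᵥ Ym)) = Vm *ᵥ ((τ ^ 2)⁻¹ • (Xmᵀ *ᵥ Ym)) := by
        rw [Matrix.mulVec_smul]
    _ = Vm *ᵥ (B *ᵥ u) := by rw [key]
    _ = (Vm * B) *ᵥ u := by rw [Matrix.mulVec_mulVec]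
    _ = u := by rw [hVmB, Matrix.one_mulVec]
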